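/- For any real m×n matrix A of rank r and any integer k with 1 ≤ k < r, the rank-k truncated SVD A_k = Σ_{i=1}^k σ_i u_i v_iᵀ satisfies ‖A − A_k‖₂ = min{‖A − B‖₂ : rank(B) ≤ k} = σ_{k+1}, where σ_i are the singular values of A in decreasing order. -/

import Mathlib

open Matrix BigOperators

noncomputable def singularValue {m n : ℕ} (A : Matrix (Fin m) (Fin n) ℝ) : Fin n → ℝ :=
  fun j =>
    Real.sqrt ((show (Aᵀ * A).IsHermitian by
        simpa using Matrix.isHermitian_conjTranspose_mul_self A).eigenvalues
      (Tuple.sort (fun i => -(show (Aᵀ * A).IsHermitian by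
        simpa using Matrix.isHermitian_conjTranspose_mul_self A).eigenvalues i) j))

noncomputable def matSpectralNorm {m n : ℕ} (A : Matrix (Fin m) (Fin n) ℝ) : ℝ :=
  ‖LinearMap.toContinuousLinearMap (Matrix.toEuclideanLin A)‖

noncomputable def frobNorm {m n : ℕ} (A : Matrix (Fin m) (Fin n) ℝ) : ℝ :=
  Real.sqrt (∑ i, ∑ j, (A i j)^2)

noncomputable def pinv {a b : ℕ} (W : Matrix (Fin a) (Fin b) ℝ) : Matrix (Fin b) (Fin a) ℝ :=
  if a ≤ b then Wᵀ * (W * Wᵀ)⁻¹ else (Wᵀ * W)⁻¹ * Wᵀ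

-- sum of squares of a combination of orthonormal vectors
lemma EY.comb_sq {m r : ℕ} (u : Fin r → Fin m → ℝ)
    (hu : ∀ i j : Fin r, (∑ t, u i t * u j t) = if i = j then 1 else 0)
    (c : Fin r → ℝ) :
    (∑ s, (∑ i, c i * u i s)^2) = ∑ i, (c i)^2 := by
  have : ∀ s : Fin m, (∑ i, c i * u i s)^2 = ∑ i, ∑ j, (c i * c j) * (u i s * u j s) := by
    intro s
    rw [sq, Finset.sum_mul_sum]
    congr 1; ext i; congr 1; ext j; ring
  rw [Finset.sum_congr rfl (fun s _ => this s)]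
  rw [Finset.sum_comm]
  have : ∀ i : Fin r, (∑ s, ∑ j, (c i * c j) * (u i s * u j s)) = (c i)^2 := by
    intro i
    rw [Finset.sum_comm]
    have : ∀ j : Fin r, (∑ s, (c i * c j) * (u i s * u j s)) = (c i * c j) * (if i = j then 1 else 0) := by
      intro j
      rw [← Finset.mul_sum, hu i j]
    rw [Finset.sum_congr rfl (fun j _ => this j)]
    simp [mul_ite, sq]
  rw [Finset.sum_congr rfl (fun i _ => this i)]

-- mulVec of a weighted sum of rank-1 matrices
lemma EY.mulVec_sum {m n r : ℕ} (u : Fin r → Fin m → ℝ) (v : Fin r → Fin n → ℝ)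
    (w : Fin r → ℝ) (x : Fin n → ℝ) :
    (∑ i, w i • Matrix.vecMulVec (u i) (v i)).mulVec x
      = fun s => ∑ i, (w i * (∑ t, v i t * x t)) * u i s := by
  funext s
  simp only [Matrix.mulVec, dotProduct, Finset.sum_apply, Matrix.sum_apply,
    Matrix.smul_apply, Matrix.vecMulVec_apply, smul_eq_mul, Finset.sum_mul]
  rw [Finset.sum_comm]
  congr 1; ext i; rw [Finset.mul_sum, Finset.sum_mul]
  congr 1; ext t; ring

lemma EY.euc_norm {m : ℕ} (y : EuclideanSpace ℝ (Fin m)) :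
    ‖y‖ = Real.sqrt (∑ i, (y i)^2) := by
  rw [EuclideanSpace.norm_eq]
  congr 1
  exact Finset.sum_congr rfl fun i _ => by rw [Real.norm_eq_abs, sq_abs]

lemma EY.spec_ge {m n : ℕ} (M : Matrix (Fin m) (Fin n) ℝ) (x : Fin n → ℝ) :
    Real.sqrt (∑ s, (M.mulVec x s)^2) ≤ matSpectralNorm M * Real.sqrt (∑ t, (x t)^2) := by
  have h := (LinearMap.toContinuousLinearMap (Matrix.toEuclideanLin M)).le_opNorm
    ((WithLp.equiv 2 (Fin n → ℝ)).symm x)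
  simp only [LinearMap.coe_toContinuousLinearMap', WithLp.equiv_symm_apply, Matrix.toEuclideanLin_apply_piLp_toLp] at h
  rw [EY.euc_norm, EY.euc_norm] at h
  exact h

lemma EY.spec_le {m n : ℕ} (M : Matrix (Fin m) (Fin n) ℝ) (C : ℝ) (hC : 0 ≤ C)
    (h : ∀ x : Fin n → ℝ,
      Real.sqrt (∑ s, (M.mulVec x s)^2) ≤ C * Real.sqrt (∑ t, (x t)^2)) :
    matSpectralNorm M ≤ C := by
  apply ContinuousLinearMap.opNorm_le_bound _ hC
  intro X
  have hX : X = (WithLp.equiv 2 (Fin n → ℝ)).symm (WithLp.equiv 2 (Fin n → ℝ) X) := rfl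
  rw [hX]
  simp only [LinearMap.coe_toContinuousLinearMap', WithLp.equiv_symm_apply, WithLp.equiv_apply, Matrix.toEuclideanLin_apply_piLp_toLp]
  rw [EY.euc_norm, EY.euc_norm]
  exact h _

lemma EY.bessel {n r : ℕ} (v : Fin r → Fin n → ℝ)
    (hv : ∀ i j : Fin r, (∑ t, v i t * v j t) = if i = j then 1 else 0)
    (x : Fin n → ℝ) :
    (∑ i, (∑ t, v i t * x t)^2) ≤ ∑ t, (x t)^2 := by
  set V : Fin r → EuclideanSpace ℝ (Fin n) := fun i => (WithLp.equiv 2 (Fin n → ℝ)).symm (v i)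
  have hinner : ∀ (a b : Fin n → ℝ),
      (inner ℝ ((WithLp.equiv 2 (Fin n → ℝ)).symm a) ((WithLp.equiv 2 (Fin n → ℝ)).symm b) : ℝ)
        = ∑ t, a t * b t := by
    intro a b
    simp [PiLp.inner_apply, RCLike.inner_apply, mul_comm]
  have hV : Orthonormal ℝ V := by
    rw [orthonormal_iff_ite]
    intro i j
    rw [hinner]
    exact hv i j
  have h := hV.sum_inner_products_le (𝕜 := ℝ)
    ((WithLp.equiv 2 (Fin n → ℝ)).symm x) (s := Finset.univ)
  have hb : ∀ i : Fin r,
      ‖(inner ℝ (V i) ((WithLp.equiv 2 (Fin n → ℝ)).symm x) : ℝ)‖^2 = (∑ t, v i t * x t)^2 := by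
    intro i
    rw [Real.norm_eq_abs, sq_abs, hinner]
  rw [Finset.sum_congr rfl (fun i _ => hb i)] at h
  rw [EY.euc_norm] at h
  rwa [Real.sq_sqrt (Finset.sum_nonneg fun t _ => sq_nonneg _)] at h

/-- Eckart–Young: the rank-k truncated SVD is the best rank-k approximation in
the spectral norm, with error σ_{k+1}. -/
theorem truncated_svd_spectral_opt {m n r : ℕ} (A : Matrix (Fin m) (Fin n) ℝ)
    (u : Fin r → Fin m → ℝ) (v : Fin r → Fin n → ℝ) (σ : Fin r → ℝ)
    (hA : A.rank = r)
    (hu : ∀ i j : Fin r, (∑ t, u i t * u j t) = if i = j then 1 else 0)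
    (hv : ∀ i j : Fin r, (∑ t, v i t * v j t) = if i = j then 1 else 0)
    (hσpos : ∀ i, 0 < σ i) (hσmono : ∀ i j : Fin r, i ≤ j → σ j ≤ σ i)
    (hsvd : A = ∑ i, σ i • Matrix.vecMulVec (u i) (v i))
    (k : ℕ) (hk1 : 1 ≤ k) (hkr : k < r) :
    matSpectralNorm (A - ∑ i : Fin r, if (i : ℕ) < k then σ i • Matrix.vecMulVec (u i) (v i) else 0)
      = σ ⟨k, hkr⟩ ∧
    ∀ B : Matrix (Fin m) (Fin n) ℝ, B.rank ≤ k →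
      σ ⟨k, hkr⟩ ≤ matSpectralNorm (A - B) := by
  set kk : Fin r := ⟨k, hkr⟩ with hkk
  have hσk : 0 < σ kk := hσpos kk
  -- weight function for the tail
  set w : Fin r → ℝ := fun i => if (i : ℕ) < k then 0 else σ i with hw
  -- the residual matrix
  have hT : A - (∑ i : Fin r, if (i : ℕ) < k then σ i • Matrix.vecMulVec (u i) (v i) else 0)
      = ∑ i, w i • Matrix.vecMulVec (u i) (v i) := by
    rw [hsvd, ← Finset.sum_sub_distrib]
    refine Finset.sum_congr rfl fun i _ => ?_
    by_cases h : (i : ℕ) < k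
    · simp [hw, h]
    · simp [hw, h]
  -- squared-norm estimates for weights
  have hwle : ∀ i : Fin r, (w i)^2 ≤ (σ kk)^2 := by
    intro i
    by_cases h : (i : ℕ) < k
    · have hwi : w i = 0 := by simp [hw, h]
      rw [hwi, zero_pow two_ne_zero]
      positivity
    · simp only [hw, if_neg h]
      have hki : kk ≤ i := by
        simp only [hkk, Fin.le_def]
        omega
      have := hσmono kk i hki
      nlinarith [le_of_lt (hσpos i)]
  constructor
  · apply le_antisymm
    · -- upper bound via Bessel
      apply EY.spec_le _ _ (le_of_lt hσk)
      intro x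
      rw [hT, EY.mulVec_sum]
      have h1 : (∑ s, (∑ i, (w i * (∑ t, v i t * x t)) * u i s)^2)
          = ∑ i, (w i * (∑ t, v i t * x t))^2 := EY.comb_sq u hu _
      have h2 : (∑ i, (w i * (∑ t, v i t * x t))^2)
          ≤ (σ kk)^2 * ∑ i, (∑ t, v i t * x t)^2 := by
        rw [Finset.mul_sum]
        refine Finset.sum_le_sum fun i _ => ?_
        have := hwle i
        nlinarith [sq_nonneg (∑ t, v i t * x t)]
      have h3 := EY.bessel v hv x
      have h4 : (∑ s, (∑ i, (w i * (∑ t, v i t * x t)) * u i s)^2)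
          ≤ (σ kk)^2 * ∑ t, (x t)^2 := by
        rw [h1]
        refine h2.trans ?_
        nlinarith [sq_nonneg (σ kk)]
      calc Real.sqrt (∑ s, (∑ i, (w i * (∑ t, v i t * x t)) * u i s)^2)
          ≤ Real.sqrt ((σ kk)^2 * ∑ t, (x t)^2) := Real.sqrt_le_sqrt h4
        _ = σ kk * Real.sqrt (∑ t, (x t)^2) := by
            rw [Real.sqrt_mul (sq_nonneg _), Real.sqrt_sq (le_of_lt hσk)]
    · -- lower bound: evaluate at v kk
      have h := EY.spec_ge (∑ i, w i • Matrix.vecMulVec (u i) (v i)) (v kk)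
      rw [EY.mulVec_sum] at h
      have hc : ∀ i : Fin r, (w i * (∑ t, v i t * v kk t)) = if i = kk then σ kk else 0 := by
        intro i
        rw [hv i kk]
        by_cases h' : i = kk
        · subst h'
          simp [hw, hkk]
        · simp [h']
      have h1 : (∑ s, (∑ i, (w i * (∑ t, v i t * v kk t)) * u i s)^2)
          = ∑ i, (if i = kk then σ kk else 0)^2 := by
        rw [Finset.sum_congr rfl (fun s _ => by
          rw [Finset.sum_congr rfl (fun i _ => by rw [hc i])])]
        exact EY.comb_sq u hu _
      have h2 : (∑ i, ((if i = kk then σ kk else 0) : ℝ)^2) = (σ kk)^2 := by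
        rw [Finset.sum_eq_single kk]
        · simp
        · intro b _ hb; simp [hb]
        · simp
      have h3 : (∑ t, (v kk t)^2) = 1 := by
        have := hv kk kk
        simpa [sq] using this
      rw [h1.trans h2, h3] at h
      rw [Real.sqrt_one, mul_one, Real.sqrt_sq (le_of_lt hσk)] at h
      rw [hT]
      exact h
  · -- optimality
    intro B hB
    -- embedding of first k+1 indices
    set e : Fin (k+1) → Fin r := fun i => ⟨(i : ℕ), lt_of_le_of_lt (Nat.lt_succ_iff.mp i.isLt) hkr⟩
      with he
    have heinj : Function.Injective e := by
      intro i j hij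
      have h2 : ((e i : Fin r) : ℕ) = ((e j : Fin r) : ℕ) := by rw [hij]
      simp only [he] at h2
      exact Fin.ext h2
    have hv' : ∀ i j : Fin (k+1), (∑ t, v (e i) t * v (e j) t) = if i = j then 1 else 0 := by
      intro i j
      rw [hv (e i) (e j)]
      by_cases h' : i = j
      · simp [h']
      · rw [if_neg h', if_neg (fun hc => h' (heinj hc))]
    have hli : LinearIndependent ℝ (fun i => v (e i)) := by
      rw [Fintype.linearIndependent_iff]
      intro g hg j
      have h1 : (∑ t, v (e j) t * (∑ i, g i • v (e i)) t) = g j := by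
        simp only [Finset.sum_apply, Pi.smul_apply, smul_eq_mul]
        have : ∀ t, v (e j) t * (∑ i, g i * v (e i) t) = ∑ i, g i * (v (e j) t * v (e i) t) := by
          intro t
          rw [Finset.mul_sum]
          congr 1; ext i; ring
        rw [Finset.sum_congr rfl (fun t _ => this t), Finset.sum_comm]
        have : ∀ i : Fin (k+1), (∑ t, g i * (v (e j) t * v (e i) t))
            = g i * (if j = i then 1 else 0) := by
          intro i
          rw [← Finset.mul_sum, hv' j i]
        rw [Finset.sum_congr rfl (fun i _ => this i)]
        simp [Finset.sum_ite_eq]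
      rw [hg] at h1
      simpa using h1.symm
    set W : Submodule ℝ (Fin n → ℝ) := Submodule.span ℝ (Set.range (fun i => v (e i))) with hW
    set K : Submodule ℝ (Fin n → ℝ) := LinearMap.ker B.mulVecLin with hK
    have hWrank : Module.finrank ℝ W = k + 1 := by
      rw [hW, finrank_span_eq_card hli, Fintype.card_fin]
    have hKrank : B.rank + Module.finrank ℝ K = n := by
      have := LinearMap.finrank_range_add_finrank_ker B.mulVecLin
      rw [Module.finrank_fintype_fun_eq_card, Fintype.card_fin] at this
      exact this
    have hsup : Module.finrank ℝ (W ⊔ K : Submodule ℝ (Fin n → ℝ)) ≤ n := by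
      have := Submodule.finrank_le (W ⊔ K : Submodule ℝ (Fin n → ℝ))
      rwa [Module.finrank_fintype_fun_eq_card, Fintype.card_fin] at this
    have hinf : 0 < Module.finrank ℝ (W ⊓ K : Submodule ℝ (Fin n → ℝ)) := by
      have := Submodule.finrank_sup_add_finrank_inf_eq W K
      omega
    obtain ⟨x, hx0⟩ := Module.finrank_pos_iff_exists_ne_zero.mp hinf
    obtain ⟨x, hxmem⟩ := x
    have hxW : x ∈ W := hxmem.1
    have hxK : x ∈ K := hxmem.2
    have hxne : x ≠ 0 := by
      intro h
      apply hx0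
      ext
      simp [h]
    obtain ⟨c, hc⟩ := (Submodule.mem_span_range_iff_exists_fun ℝ).mp hxW
    -- coordinates of x
    set d : Fin r → ℝ := fun j => ∑ t, v j t * x t with hdd
    have hxt : ∀ t, x t = ∑ i, c i * v (e i) t := by
      intro t
      rw [← hc]
      simp [Finset.sum_apply]
    have hd : ∀ j : Fin r, d j = if h : (j : ℕ) < k + 1 then c ⟨(j : ℕ), h⟩ else 0 := by
      intro j
      rw [hdd]
      simp only
      rw [Finset.sum_congr rfl (fun t _ => by rw [hxt t])]
      have : ∀ t, v j t * (∑ i, c i * v (e i) t) = ∑ i, c i * (v j t * v (e i) t) := by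
        intro t
        rw [Finset.mul_sum]
        congr 1; ext i; ring
      rw [Finset.sum_congr rfl (fun t _ => this t), Finset.sum_comm]
      have hterm : ∀ i : Fin (k+1), (∑ t, c i * (v j t * v (e i) t))
          = c i * (if j = e i then 1 else 0) := by
        intro i
        rw [← Finset.mul_sum, hv j (e i)]
      rw [Finset.sum_congr rfl (fun i _ => hterm i)]
      by_cases h : (j : ℕ) < k + 1
      · rw [dif_pos h, Finset.sum_eq_single ⟨(j : ℕ), h⟩]
        · rw [if_pos (by apply Fin.ext; simp [he]), mul_one]
        · intro b _ hb
          rw [if_neg, mul_zero]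
          intro hcon
          apply hb
          have hval : (j : ℕ) = ((e b : Fin r) : ℕ) := congrArg Fin.val hcon
          simp only [he] at hval
          exact Fin.ext hval.symm
        · simp
      · rw [dif_neg h]
        apply Finset.sum_eq_zero
        intro i _
        rw [if_neg, mul_zero]
        intro hcon
        have hval : (j : ℕ) = ((e i : Fin r) : ℕ) := congrArg Fin.val hcon
        simp only [he] at hval
        have hi := i.isLt
        omega
    -- ∑ d j ^ 2 = ∑ x t ^ 2
    have hxsq : (∑ t, (x t)^2) = ∑ i, (c i)^2 := by
      rw [Finset.sum_congr rfl (fun t _ => by rw [hxt t])]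
      exact EY.comb_sq (fun i => v (e i)) hv' c
    set G : ℕ → ℝ := fun a => if h : a < k + 1 then (c ⟨a, h⟩)^2 else 0 with hG
    have hdsq : (∑ j, (d j)^2) = ∑ i, (c i)^2 := by
      have h1 : (∑ j : Fin r, (d j)^2) = ∑ j : Fin r, G (j : ℕ) := by
        refine Finset.sum_congr rfl fun j _ => ?_
        rw [hd j, hG]
        by_cases h : (j : ℕ) < k + 1
        · rw [dif_pos h]; simp only [dif_pos h]
        · rw [dif_neg h]; simp only [dif_neg h]; rw [zero_pow two_ne_zero]
      have h2 : (∑ j : Fin r, G (j : ℕ)) = ∑ a ∈ Finset.range r, G a :=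
        Fin.sum_univ_eq_sum_range G r
      have h3 : (∑ a ∈ Finset.range (k+1), G a) = ∑ a ∈ Finset.range r, G a := by
        apply Finset.sum_subset
        · exact Finset.range_subset_range.mpr (by omega)
        · intro a _ ha
          rw [Finset.mem_range, not_lt] at ha
          rw [hG]
          exact dif_neg (by omega)
      have h4 : (∑ i : Fin (k+1), (c i)^2) = ∑ a ∈ Finset.range (k+1), G a := by
        rw [← Fin.sum_univ_eq_sum_range G (k+1)]
        refine Finset.sum_congr rfl fun i _ => ?_
        rw [hG]
        simp only [dif_pos i.isLt]
      rw [h1, h2, ← h3, ← h4]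
    -- (A - B) x = A x
    have hBx : B.mulVec x = 0 := hxK
    have hABx : (A - B).mulVec x = A.mulVec x := by
      rw [Matrix.sub_mulVec, hBx, sub_zero]
    have hAx : (∑ s, ((A - B).mulVec x s)^2) = ∑ j, (σ j * d j)^2 := by
      rw [hABx, hsvd, EY.mulVec_sum]
      exact EY.comb_sq u hu _
    have hlow : (σ kk)^2 * (∑ t, (x t)^2) ≤ ∑ s, ((A - B).mulVec x s)^2 := by
      rw [hAx, hxsq, ← hdsq, Finset.mul_sum]
      refine Finset.sum_le_sum fun j _ => ?_
      by_cases h : (j : ℕ) < k + 1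
      · have hjk : j ≤ kk := by
          rw [Fin.le_def]
          simp only [hkk]
          omega
        have h1 : σ kk ≤ σ j := hσmono j kk hjk
        have h2 : σ kk ^ 2 * d j ^ 2 ≤ σ j ^ 2 * d j ^ 2 :=
          mul_le_mul_of_nonneg_right (by nlinarith [le_of_lt (hσpos kk)]) (sq_nonneg _)
        calc σ kk ^ 2 * d j ^ 2 ≤ σ j ^ 2 * d j ^ 2 := h2
          _ = (σ j * d j) ^ 2 := by ring
      · rw [hd j, dif_neg h]
        simp
    -- conclude
    have hxpos : 0 < ∑ t, (x t)^2 := by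
      rcases Function.ne_iff.mp hxne with ⟨t, ht⟩
      have : (0:ℝ) < (x t)^2 := pow_two_pos_of_ne_zero ht
      exact Finset.sum_pos' (fun s _ => sq_nonneg _) ⟨t, Finset.mem_univ t, this⟩
    have hge := EY.spec_ge (A - B) x
    have hstep : σ kk * Real.sqrt (∑ t, (x t)^2) ≤ Real.sqrt (∑ s, ((A - B).mulVec x s)^2) := by
      have : Real.sqrt ((σ kk)^2 * (∑ t, (x t)^2)) ≤ Real.sqrt (∑ s, ((A - B).mulVec x s)^2) :=
        Real.sqrt_le_sqrt hlow
      rwa [Real.sqrt_mul (sq_nonneg _), Real.sqrt_sq (le_of_lt hσk)] at this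
    have hfinal : σ kk * Real.sqrt (∑ t, (x t)^2)
        ≤ matSpectralNorm (A - B) * Real.sqrt (∑ t, (x t)^2) := hstep.trans hge
    have hs : 0 < Real.sqrt (∑ t, (x t)^2) := Real.sqrt_pos.mpr hxpos
    exact le_of_mul_le_mul_right hfinal hs
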